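/- Let g : ℝ → ℝ be continuous and nonnegative with γ₁(h) = ∫₀^h ∫₀^{h-τ} g(t) dt dτ. For h > 0 and δ ∈ [0, h], the function δ ↦ γ₁(h+δ) + γ₁(h-δ) is monotone nondecreasing on [0,h]. -/

import Mathlib

open intervalIntegral Set

/-- With `γ₁ h = ∫ τ in 0..h, ∫ t in 0..(h-τ), g t` for continuous nonnegative `g`, for any
`h > 0` the function `δ ↦ γ₁(h+δ) + γ₁(h-δ)` is monotone nondecreasing on `[0, h]`. -/
theorem stmt_3 (g : ℝ → ℝ) (hg : Continuous g) (hg0 : ∀ t, 0 ≤ g t)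
    (γ₁ : ℝ → ℝ)
    (hγ₁ : ∀ h : ℝ, γ₁ h = ∫ τ in (0:ℝ)..h, ∫ t in (0:ℝ)..(h - τ), g t)
    (h : ℝ) (hh : 0 < h) :
    MonotoneOn (fun δ : ℝ => γ₁ (h + δ) + γ₁ (h - δ)) (Set.Icc 0 h) := by
  set G : ℝ → ℝ := fun u => ∫ t in (0:ℝ)..u, g t with hG
  have hint : ∀ a b : ℝ, IntervalIntegrable g MeasureTheory.volume a b :=
    fun a b => hg.intervalIntegrable a b
  have hGmono : Monotone G := by
    intro x y hxy
    have key : G y - G x = ∫ t in x..y, g t := by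
      rw [hG]; dsimp only
      rw [← intervalIntegral.integral_add_adjacent_intervals (hint 0 x) (hint x y)]
      ring
    have h0 : 0 ≤ ∫ t in x..y, g t :=
      intervalIntegral.integral_nonneg (μ := MeasureTheory.volume) hxy (fun t _ => hg0 t)
    linarith [key ▸ h0]
  have hγ : ∀ x : ℝ, γ₁ x = ∫ u in (0:ℝ)..x, G u := by
    intro x
    have e1 : (∫ τ in (0:ℝ)..x, ∫ t in (0:ℝ)..(x - τ), g t) = ∫ τ in (0:ℝ)..x, G (x - τ) := rfl
    rw [hγ₁, e1, intervalIntegral.integral_comp_sub_left G x, sub_self, sub_zero]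
  have hGc : Continuous G :=
    intervalIntegral.continuous_primitive (fun a b => hint a b) 0
  have hd : ∀ x : ℝ, HasDerivAt (fun y => ∫ u in (0:ℝ)..y, G u) (G x) x :=
    fun x => intervalIntegral.integral_hasDerivAt_right (hGc.intervalIntegrable 0 x)
      (hGc.stronglyMeasurableAtFilter _ _) hGc.continuousAt
  have hf : ∀ δ : ℝ, HasDerivAt (fun δ : ℝ => γ₁ (h + δ) + γ₁ (h - δ))
      (G (h + δ) - G (h - δ)) δ := by
    intro δ
    have h1 : HasDerivAt (fun δ : ℝ => ∫ u in (0:ℝ)..(h + δ), G u) (G (h + δ) * 1) δ :=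
      (hd (h + δ)).comp δ ((hasDerivAt_id δ).const_add h)
    have hsub : HasDerivAt (fun δ : ℝ => h - δ) (-1) δ := by
      simpa using (hasDerivAt_id δ).const_sub h
    have h2 : HasDerivAt (fun δ : ℝ => ∫ u in (0:ℝ)..(h - δ), G u) (G (h - δ) * (-1)) δ :=
      (hd (h - δ)).comp δ hsub
    have hsum := h1.add h2
    have heq : (fun δ : ℝ => γ₁ (h + δ) + γ₁ (h - δ))
        = fun δ : ℝ => (∫ u in (0:ℝ)..(h + δ), G u) + ∫ u in (0:ℝ)..(h - δ), G u := by
      funext δ; rw [hγ, hγ]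
    rw [heq]
    exact hsum.congr_deriv (by ring)
  have hdiff : Differentiable ℝ (fun δ : ℝ => γ₁ (h + δ) + γ₁ (h - δ)) :=
    fun x => (hf x).differentiableAt
  apply monotoneOn_of_deriv_nonneg (convex_Icc 0 h) hdiff.continuous.continuousOn
  · exact fun x _ => (hdiff x).differentiableWithinAt
  · intro x hx
    rw [(hf x).deriv]
    rw [interior_Icc] at hx
    have hle : h - x ≤ h + x := by linarith [hx.1]
    linarith [hGmono hle]
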